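/- Over the max-plus semifield, let A be an n×n matrix, b a vector, d a regular vector, and Δ = Tr(A) ⊕ d⁻ A* b. If Δ ≤ 0, then every vector x = A* u with b ≤ u ≤ (d⁻ A*)⁻ and u regular satisfies both A x ⊕ b ≤ x and x ≤ d; and if Δ > 0, the system {A x ⊕ b ≤ x, x ≤ d} has no regular solution. -/

import Mathlib

/-- Max-plus matrix–vector product: `(A x)_i = max_j (a_{ij} + x_j)`. -/
noncomputable def mpMulVec {n : ℕ} (A : Fin n → Fin n → EReal) (x : Fin n → EReal) :
    Fin n → EReal :=
  fun i => Finset.univ.sup fun j => A i j + x j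

/-- Max-plus matrix product. -/
noncomputable def mpMul {n : ℕ} (A B : Fin n → Fin n → EReal) :
    Fin n → Fin n → EReal :=
  fun i j => Finset.univ.sup fun k => A i k + B k j

/-- Max-plus identity matrix: `0` on the diagonal and `-∞` elsewhere. -/
noncomputable def mpId {n : ℕ} : Fin n → Fin n → EReal :=
  fun i j => if i = j then 0 else ⊥

/-- Max-plus matrix power. -/
noncomputable def mpPow {n : ℕ} (A : Fin n → Fin n → EReal) : ℕ → (Fin n → Fin n → EReal)
  | 0 => mpId
  | k + 1 => mpMul (mpPow A k) A

/-- Max-plus trace: maximum of the diagonal entries. -/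
noncomputable def mpTrace {n : ℕ} (A : Fin n → Fin n → EReal) : EReal :=
  Finset.univ.sup fun i => A i i

/-- `Tr(A) = tr A ⊕ tr A² ⊕ ⋯ ⊕ tr Aⁿ`. -/
noncomputable def mpTr {n : ℕ} (A : Fin n → Fin n → EReal) : EReal :=
  (Finset.Icc 1 n).sup fun k => mpTrace (mpPow A k)

/-- The Kleene star `A* = I ⊕ A ⊕ ⋯ ⊕ A^{n-1}`. -/
noncomputable def mpStar {n : ℕ} (A : Fin n → Fin n → EReal) :
    Fin n → Fin n → EReal :=
  fun i j => (Finset.range n).sup fun k => mpPow A k i j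

namespace MPAux

open Finset

lemma sup_add_const {ι : Type*} (s : Finset ι) (f : ι → EReal) (c : EReal) :
    s.sup f + c = s.sup (fun x => f x + c) := by
  rcases s.eq_empty_or_nonempty with rfl | hs
  · simp
  · apply le_antisymm
    · obtain ⟨j, hj, hval⟩ := s.exists_mem_eq_sup hs f
      rw [hval]
      exact Finset.le_sup (f := fun x => f x + c) hj
    · exact Finset.sup_le fun x hx => add_le_add_left (Finset.le_sup hx) c

lemma const_add_sup {ι : Type*} (s : Finset ι) (f : ι → EReal) (c : EReal) :
    c + s.sup f = s.sup (fun x => c + f x) := by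
  rw [add_comm, sup_add_const]
  exact Finset.sup_congr rfl fun x _ => add_comm _ _

lemma sup_ne_top {ι : Type*} (s : Finset ι) (f : ι → EReal) (h : ∀ x ∈ s, f x ≠ ⊤) :
    s.sup f ≠ ⊤ := by
  intro ht
  rcases s.eq_empty_or_nonempty with rfl | hs
  · simp at ht
  · obtain ⟨j, hj, hv⟩ := s.exists_mem_eq_sup hs f
    exact h j hj (hv ▸ ht)

lemma add_ne_top {a b : EReal} (ha : a ≠ ⊤) (hb : b ≠ ⊤) : a + b ≠ ⊤ := by
  induction a <;> induction b <;> simp_all [← EReal.coe_add]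

lemma ereal_cases (x : EReal) (hx : x ≠ ⊤) : x = ⊥ ∨ ∃ r : ℝ, x = (r : EReal) := by
  induction x with
  | bot => exact Or.inl rfl
  | coe r => exact Or.inr ⟨r, rfl⟩
  | top => exact absurd rfl hx

lemma ereal_cancel {a : EReal} {r : ℝ} (h : a + (r : EReal) ≤ (r : EReal)) : a ≤ 0 :=
  ((EReal.addLECancellable_coe r).add_le_add_iff_right (b := a) (c := 0)).mp
    (by rwa [zero_add])

variable {n : ℕ}

lemma mulVec_comp (B C : Fin n → Fin n → EReal) (v : Fin n → EReal) :
    mpMulVec (mpMul B C) v = mpMulVec B (mpMulVec C v) := by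
  funext i
  show (univ.sup fun j => (univ.sup fun k => B i k + C k j) + v j)
      = univ.sup fun k => B i k + univ.sup fun j => C k j + v j
  calc (univ.sup fun j => (univ.sup fun k => B i k + C k j) + v j)
      = univ.sup (fun j => univ.sup fun k => B i k + C k j + v j) :=
        Finset.sup_congr rfl fun j _ => sup_add_const _ _ _
    _ = univ.sup (fun k => univ.sup fun j => B i k + C k j + v j) := Finset.sup_comm _ _ _
    _ = univ.sup (fun k => B i k + univ.sup fun j => C k j + v j) := by
        refine Finset.sup_congr rfl fun k _ => ?_
        rw [const_add_sup]
        exact Finset.sup_congr rfl fun j _ => add_assoc _ _ _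

lemma mpMul_assoc (B C D : Fin n → Fin n → EReal) :
    mpMul (mpMul B C) D = mpMul B (mpMul C D) := by
  funext i j
  exact congrFun (mulVec_comp B C (fun k => D k j)) i

lemma id_mul (B : Fin n → Fin n → EReal) : mpMul mpId B = B := by
  funext i j
  apply le_antisymm
  · apply Finset.sup_le
    intro k _
    rcases eq_or_ne i k with rfl | h
    · simp [mpId]
    · simp [mpId, h]
  · have h : B i j = mpId i i + B i j := by simp [mpId]
    exact h.le.trans (Finset.le_sup (f := fun k => mpId i k + B k j) (mem_univ i))

lemma mul_id (B : Fin n → Fin n → EReal) : mpMul B mpId = B := by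
  funext i j
  apply le_antisymm
  · apply Finset.sup_le
    intro k _
    rcases eq_or_ne k j with rfl | h
    · simp [mpId]
    · simp [mpId, h]
  · have h : B i j = B i j + mpId j j := by simp [mpId]
    exact h.le.trans (Finset.le_sup (f := fun k => B i k + mpId k j) (mem_univ j))

lemma pow_succ' (A : Fin n → Fin n → EReal) (k : ℕ) :
    mpPow A (k + 1) = mpMul A (mpPow A k) := by
  induction k with
  | zero => show mpMul mpId A = mpMul A mpId; rw [id_mul, mul_id]
  | succ k ih =>
      show mpMul (mpPow A (k + 1)) A = mpMul A (mpMul (mpPow A k) A)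
      rw [ih, mpMul_assoc]

lemma id_mulVec (v : Fin n → EReal) (i : Fin n) : mpMulVec mpId v i = v i := by
  apply le_antisymm
  · apply Finset.sup_le
    intro k _
    rcases eq_or_ne i k with rfl | h
    · simp [mpId]
    · simp [mpId, h]
  · have h : v i = mpId i i + v i := by simp [mpId]
    exact h.le.trans (Finset.le_sup (f := fun k => mpId i k + v k) (mem_univ i))

lemma mulVec_mono (M : Fin n → Fin n → EReal) {v w : Fin n → EReal}
    (h : ∀ j, v j ≤ w j) (i : Fin n) : mpMulVec M v i ≤ mpMulVec M w i :=
  Finset.sup_le fun j _ =>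
    le_trans (add_le_add_right (h j) _) (Finset.le_sup (f := fun j => M i j + w j) (mem_univ j))

lemma pow_ne_top (A : Fin n → Fin n → EReal) (hA : ∀ i j, A i j ≠ ⊤) :
    ∀ m i j, mpPow A m i j ≠ ⊤ := by
  intro m
  induction m with
  | zero =>
      intro i j
      show mpId i j ≠ ⊤
      unfold mpId
      split <;> simp
  | succ m ih =>
      intro i j
      show (Finset.univ.sup fun k => mpPow A m i k + A k j) ≠ ⊤
      exact sup_ne_top _ _ fun k _ => add_ne_top (ih i k) (hA k j)

lemma star_ne_top (A : Fin n → Fin n → EReal) (hA : ∀ i j, A i j ≠ ⊤) (i j : Fin n) :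
    mpStar A i j ≠ ⊤ :=
  sup_ne_top _ _ fun k _ => pow_ne_top A hA k i j

/-- weight of the length-`m` prefix of the walk `w`. -/
noncomputable def chainW (A : Fin n → Fin n → EReal) (m : ℕ) (w : ℕ → Fin n) : EReal :=
  ∑ t ∈ Finset.range m, A (w t) (w (t + 1))

lemma chain_le_pow (A : Fin n → Fin n → EReal) (m : ℕ) (w : ℕ → Fin n) :
    chainW A m w ≤ mpPow A m (w 0) (w m) := by
  induction m with
  | zero => simp [chainW, mpPow, mpId]
  | succ m ih =>
      have h1 : chainW A (m + 1) w = chainW A m w + A (w m) (w (m + 1)) :=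
        Finset.sum_range_succ _ _
      rw [h1]
      refine le_trans (add_le_add_left ih _) ?_
      exact Finset.le_sup (f := fun k => mpPow A m (w 0) k + A k (w (m + 1))) (mem_univ (w m))

lemma pow_le_chain (A : Fin n → Fin n → EReal) :
    ∀ (m : ℕ) (i j : Fin n), mpPow A m i j = ⊥ ∨
      ∃ w : ℕ → Fin n, w 0 = i ∧ w m = j ∧ mpPow A m i j ≤ chainW A m w := by
  intro m
  induction m with
  | zero =>
      intro i j
      rcases eq_or_ne i j with rfl | h
      · exact Or.inr ⟨fun _ => i, rfl, rfl, by simp [mpPow, mpId, chainW]⟩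
      · left; simp [mpPow, mpId, h]
  | succ m ih =>
      intro i j
      have hne : (univ : Finset (Fin n)).Nonempty := ⟨i, mem_univ i⟩
      obtain ⟨k, -, hk⟩ := Finset.exists_mem_eq_sup univ hne (fun k => mpPow A m i k + A k j)
      have hrepr : mpPow A (m + 1) i j = mpPow A m i k + A k j := hk
      rcases ih i k with hbot | ⟨w, hw0, hwm, hwle⟩
      · left; rw [hrepr, hbot, EReal.bot_add]
      · right
        refine ⟨fun t => if t ≤ m then w t else j, by simp [hw0], by simp, ?_⟩
        have hch : chainW A (m + 1) (fun t => if t ≤ m then w t else j)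
            = chainW A m w + A k j := by
          have h1 : chainW A (m + 1) (fun t => if t ≤ m then w t else j)
              = chainW A m (fun t => if t ≤ m then w t else j)
                + A (if m ≤ m then w m else j) (if m + 1 ≤ m then w (m + 1) else j) :=
            Finset.sum_range_succ _ _
          rw [h1]
          congr 1
          · refine Finset.sum_congr rfl fun t ht => ?_
            have ht' : t < m := mem_range.mp ht
            show A (if t ≤ m then w t else j) (if t + 1 ≤ m then w (t + 1) else j)
                = A (w t) (w (t + 1))
            rw [if_pos (by omega : t ≤ m), if_pos (by omega : t + 1 ≤ m)]
          · rw [if_pos le_rfl, if_neg (by omega), hwm]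
        rw [hrepr, hch]
        exact add_le_add_left hwle _

lemma chain_split (A : Fin n → Fin n → EReal) (a b : ℕ) (w : ℕ → Fin n) :
    chainW A (a + b) w = chainW A a w + chainW A b (fun t => w (t + a)) := by
  induction b with
  | zero => simp [chainW]
  | succ b ih =>
      have h1 : chainW A (a + (b + 1)) w
          = chainW A (a + b) w + A (w (a + b)) (w (a + b + 1)) := by
        rw [show a + (b + 1) = (a + b) + 1 by ring]
        exact Finset.sum_range_succ _ _
      have h2 : chainW A (b + 1) (fun t => w (t + a))
          = chainW A b (fun t => w (t + a)) + A (w (b + a)) (w (b + 1 + a)) :=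
        Finset.sum_range_succ _ _
      rw [h1, ih, h2, show b + a = a + b by ring, show b + 1 + a = a + b + 1 by ring,
        add_assoc]

lemma chain_shorten (A : Fin n → Fin n → EReal) (htr : mpTr A ≤ 0) (w : ℕ → Fin n)
    (p q : ℕ) (hpq : p < q) (hqn : q ≤ n) (hw : w p = w q) :
    chainW A n w ≤ mpStar A (w 0) (w n) := by
  set c := q - p with hc
  set r := n - q with hr
  have hn : n = (p + c) + r := by omega
  have hc1 : 1 ≤ c := by omega
  -- decomposition of the full chain
  have hd : chainW A n w
      = (chainW A p w + chainW A c (fun t => w (t + p)))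
        + chainW A r (fun t => w (t + (p + c))) := by
    have h1 : chainW A ((p + c) + r) w
        = (chainW A p w + chainW A c (fun t => w (t + p)))
          + chainW A r (fun t => w (t + (p + c))) := by
      rw [chain_split A (p + c) r w, chain_split A p c w]
    rw [← hn] at h1
    exact h1
  -- the middle cycle has nonpositive weight
  have hmid : chainW A c (fun t => w (t + p)) ≤ 0 := by
    have h1 : chainW A c (fun t => w (t + p)) ≤ mpPow A c (w (0 + p)) (w (c + p)) :=
      chain_le_pow A c (fun t => w (t + p))
    have h2 : w (c + p) = w p := by rw [show c + p = q by omega, ← hw]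
    have h3 : w (0 + p) = w p := by rw [zero_add]
    rw [h2, h3] at h1
    have h4 : mpPow A c (w p) (w p) ≤ mpTrace (mpPow A c) :=
      Finset.le_sup (f := fun i => mpPow A c i i) (mem_univ (w p))
    have h5 : mpTrace (mpPow A c) ≤ mpTr A :=
      Finset.le_sup (f := fun k => mpTrace (mpPow A k)) (mem_Icc.mpr ⟨hc1, by omega⟩)
    exact le_trans h1 (le_trans h4 (le_trans h5 htr))
  -- the shortened walk
  set w' : ℕ → Fin n := fun t => if t < p then w t else w (t + c) with hw'
  have hw'0 : w' 0 = w 0 := by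
    rcases Nat.eq_zero_or_pos p with rfl | hp
    · show w (0 + c) = w 0
      rw [zero_add, show c = q by omega, ← hw]
    · exact if_pos hp
  have hw'e : w' (p + r) = w n := by
    show (if p + r < p then w (p + r) else w (p + r + c)) = w n
    rw [if_neg (by omega), show p + r + c = n by omega]
  have hrest : chainW A p w + chainW A r (fun t => w (t + (p + c)))
      = chainW A (p + r) w' := by
    rw [chain_split A p r w']
    congr 1
    · refine Finset.sum_congr rfl fun t ht => ?_
      have ht' : t < p := mem_range.mp ht
      have e1 : w' t = w t := if_pos ht'
      have e2 : w' (t + 1) = w (t + 1) := by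
        rcases eq_or_lt_of_le (by omega : t + 1 ≤ p) with he | hlt
        · show (if t + 1 < p then w (t + 1) else w (t + 1 + c)) = w (t + 1)
          rw [if_neg (by omega), he, show p + c = q by omega, ← hw, ← he]
        · exact if_pos hlt
      show A (w t) (w (t + 1)) = A (w' t) (w' (t + 1))
      rw [e1, e2]
    · refine Finset.sum_congr rfl fun t _ => ?_
      have e1 : w' (t + p) = w (t + (p + c)) := by
        show (if t + p < p then w (t + p) else w (t + p + c)) = w (t + (p + c))
        rw [if_neg (by omega), show t + p + c = t + (p + c) by ring]
      have e2 : w' (t + 1 + p) = w (t + 1 + (p + c)) := by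
        show (if t + 1 + p < p then w (t + 1 + p) else w (t + 1 + p + c)) = w (t + 1 + (p + c))
        rw [if_neg (by omega), show t + 1 + p + c = t + 1 + (p + c) by ring]
      show A (w (t + (p + c))) (w (t + 1 + (p + c))) = A (w' (t + p)) (w' (t + 1 + p))
      rw [e1, e2]
  have hfinal : chainW A (p + r) w' ≤ mpStar A (w 0) (w n) := by
    have h1 : chainW A (p + r) w' ≤ mpPow A (p + r) (w' 0) (w' (p + r)) :=
      chain_le_pow A (p + r) w'
    rw [hw'0, hw'e] at h1
    refine le_trans h1 ?_
    exact Finset.le_sup (f := fun k => mpPow A k (w 0) (w n)) (mem_range.mpr (by omega))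
  calc chainW A n w
      = (chainW A p w + chainW A c (fun t => w (t + p)))
          + chainW A r (fun t => w (t + (p + c))) := hd
    _ ≤ (chainW A p w + 0) + chainW A r (fun t => w (t + (p + c))) :=
        add_le_add_left (add_le_add_right hmid _) _
    _ = chainW A p w + chainW A r (fun t => w (t + (p + c))) := by rw [add_zero]
    _ = chainW A (p + r) w' := hrest
    _ ≤ mpStar A (w 0) (w n) := hfinal

lemma pow_n_le_star (A : Fin n → Fin n → EReal) (htr : mpTr A ≤ 0) (i j : Fin n) :
    mpPow A n i j ≤ mpStar A i j := by
  rcases pow_le_chain A n i j with hbot | ⟨w, hw0, hwn, hle⟩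
  · rw [hbot]; exact bot_le
  · have hcard : Fintype.card (Fin n) < Fintype.card (Fin (n + 1)) := by simp
    obtain ⟨p, q, hne, heq⟩ :=
      Fintype.exists_ne_map_eq_of_card_lt (fun t : Fin (n + 1) => w t) hcard
    have hfin : chainW A n w ≤ mpStar A (w 0) (w n) := by
      rcases Ne.lt_or_gt hne with h | h
      · exact chain_shorten A htr w p q h (by omega) heq
      · exact chain_shorten A htr w q p h (by omega) heq.symm
    rw [hw0, hwn] at hfin
    exact le_trans hle hfin

lemma pow_le_star (A : Fin n → Fin n → EReal) (htr : mpTr A ≤ 0) (m : ℕ) (hm : m ≤ n)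
    (i j : Fin n) : mpPow A m i j ≤ mpStar A i j := by
  rcases lt_or_eq_of_le hm with h | rfl
  · exact Finset.le_sup (f := fun k => mpPow A k i j) (mem_range.mpr h)
  · exact pow_n_le_star A htr i j

end MPAux

open Finset MPAux in
/-- Max-plus: for `Δ = Tr(A) ⊕ d⁻ A* b`: if `Δ ≤ 0` then every `x = A* u` with
`b ≤ u ≤ (d⁻ A*)⁻`, `u` regular, solves the system `A x ⊕ b ≤ x`, `x ≤ d`;
if `Δ > 0` the system has no regular solution. -/
theorem stmt14 {n : ℕ} (A : Fin n → Fin n → EReal) (hA : ∀ i j, A i j ≠ ⊤)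
    (b : Fin n → EReal) (hb : ∀ i, b i ≠ ⊤) (d : Fin n → ℝ) :
    ((mpTr A ⊔ Finset.univ.sup
        (fun i => (-(d i : EReal)) + mpMulVec (mpStar A) b i)) ≤ 0 →
      ∀ u : Fin n → ℝ, (∀ j, b j ≤ (u j : EReal)) →
        (∀ j, (u j : EReal) ≤
            -(Finset.univ.sup fun i => (-(d i : EReal)) + mpStar A i j)) →
        (∀ i, mpMulVec A (mpMulVec (mpStar A) fun j => (u j : EReal)) i ⊔ b i ≤
              mpMulVec (mpStar A) (fun j => (u j : EReal)) i) ∧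
        (∀ i, mpMulVec (mpStar A) (fun j => (u j : EReal)) i ≤ (d i : EReal))) ∧
    (0 < (mpTr A ⊔ Finset.univ.sup
        (fun i => (-(d i : EReal)) + mpMulVec (mpStar A) b i)) →
      ¬ ∃ x : Fin n → ℝ,
          (∀ i, mpMulVec A (fun j => (x j : EReal)) i ⊔ b i ≤ (x i : EReal)) ∧
          (∀ i, (x i : EReal) ≤ (d i : EReal))) := by
  constructor
  · -- Part 1
    intro hΔ u hbu hud
    have htr : mpTr A ≤ 0 := le_trans le_sup_left hΔ
    set u' : Fin n → EReal := fun j => (u j : EReal) with hu'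
    constructor
    · intro i
      have hnpos : 0 < n := i.pos
      refine sup_le ?_ ?_
      · -- A (A* u) ≤ A* u
        apply Finset.sup_le
        intro j _
        have h1 : A i j + mpMulVec (mpStar A) u' j
            = univ.sup (fun k => A i j + (mpStar A j k + u' k)) := const_add_sup _ _ _
        rw [h1]
        apply Finset.sup_le
        intro k _
        rw [← add_assoc]
        have h2 : A i j + mpStar A j k ≤ mpStar A i k := by
          have h3 : A i j + mpStar A j k
              = (range n).sup (fun m => A i j + mpPow A m j k) := const_add_sup _ _ _
          rw [h3]
          apply Finset.sup_le
          intro m hm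
          have h4 : A i j + mpPow A m j k ≤ mpPow A (m + 1) i k := by
            rw [pow_succ']
            exact Finset.le_sup (f := fun l => A i l + mpPow A m l k) (mem_univ j)
          exact le_trans h4 (pow_le_star A htr (m + 1) (by have := mem_range.mp hm; omega) i k)
        exact le_trans (add_le_add_left h2 _)
          (Finset.le_sup (f := fun k => mpStar A i k + u' k) (mem_univ k))
      · -- b ≤ A* u
        have h0 : (0 : EReal) ≤ mpStar A i i :=
          le_trans (by simp [mpPow, mpId]) (Finset.le_sup (f := fun k => mpPow A k i i)
            (mem_range.mpr hnpos))
        have h1 : u' i ≤ mpStar A i i + u' i := by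
          calc u' i = 0 + u' i := (zero_add _).symm
            _ ≤ mpStar A i i + u' i := add_le_add_left h0 _
        exact le_trans (hbu i) (le_trans h1
          (Finset.le_sup (f := fun k => mpStar A i k + u' k) (mem_univ i)))
    · intro i
      apply Finset.sup_le
      intro j _
      have hm : (-(d i : EReal)) + mpStar A i j
          ≤ univ.sup fun i' => (-(d i' : EReal)) + mpStar A i' j :=
        Finset.le_sup (f := fun i' => (-(d i' : EReal)) + mpStar A i' j) (mem_univ i)
      have hle : (u j : EReal) ≤ -((-(d i : EReal)) + mpStar A i j) :=
        le_trans (hud j) (EReal.neg_le_neg_iff.mpr hm)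
      have hcase : mpStar A i j = ⊥ ∨ ∃ r : ℝ, mpStar A i j = (r : EReal) :=
        ereal_cases _ (star_ne_top A hA i j)
      rcases hcase with hbot | ⟨r, hrr⟩
      · rw [hbot, EReal.bot_add]; exact bot_le
      · rw [hrr] at hle ⊢
        have hneg : -((-(d i : EReal)) + (r : EReal)) = ((d i - r : ℝ) : EReal) := by
          rw [← EReal.coe_neg, ← EReal.coe_add, ← EReal.coe_neg, EReal.coe_eq_coe_iff]
          ring
        rw [hneg] at hle
        have hle' : u j ≤ d i - r := EReal.coe_le_coe_iff.mp hle
        have : ((r : ℝ) : EReal) + (u j : EReal) = ((r + u j : ℝ) : EReal) := by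
          rw [← EReal.coe_add]
        rw [this]
        exact EReal.coe_le_coe_iff.mpr (by linarith)
  · -- Part 2
    rintro hΔ ⟨x, hx1, hx2⟩
    set x' : Fin n → EReal := fun j => (x j : EReal) with hx'
    have hAx : ∀ i, mpMulVec A x' i ≤ x' i := fun i => le_trans le_sup_left (hx1 i)
    have hbx : ∀ i, b i ≤ x' i := fun i => le_trans le_sup_right (hx1 i)
    have hpow : ∀ m i, mpMulVec (mpPow A m) x' i ≤ x' i := by
      intro m
      induction m with
      | zero => intro i; rw [show mpPow A 0 = mpId from rfl, id_mulVec]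
      | succ m ih =>
          intro i
          have h1 : mpMulVec (mpPow A (m + 1)) x' = mpMulVec (mpPow A m) (mpMulVec A x') :=
            mulVec_comp _ _ _
          rw [h1]
          exact le_trans (mulVec_mono _ hAx i) (ih i)
    have htrace : ∀ m (i : Fin n), mpPow A m i i ≤ 0 := by
      intro m i
      have h1 : mpPow A m i i + x' i ≤ mpMulVec (mpPow A m) x' i :=
        Finset.le_sup (f := fun j => mpPow A m i j + x' j) (mem_univ i)
      have h2 : mpPow A m i i + (x i : EReal) ≤ (x i : EReal) := le_trans h1 (hpow m i)
      exact ereal_cancel h2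
    have hTr : mpTr A ≤ 0 := by
      apply Finset.sup_le
      intro k _
      exact Finset.sup_le fun i _ => htrace k i
    have hstarb : ∀ i, mpMulVec (mpStar A) b i ≤ x' i := by
      intro i
      apply Finset.sup_le
      intro j _
      have h1 : mpStar A i j + b j = (range n).sup (fun m => mpPow A m i j + b j) :=
        sup_add_const _ _ _
      rw [h1]
      apply Finset.sup_le
      intro m _
      have h2 : mpPow A m i j + b j ≤ mpPow A m i j + x' j := add_le_add_right (hbx j) _
      have h3 : mpPow A m i j + x' j ≤ mpMulVec (mpPow A m) x' i :=
        Finset.le_sup (f := fun j => mpPow A m i j + x' j) (mem_univ j)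
      exact le_trans h2 (le_trans h3 (hpow m i))
    have hsup2 : (univ.sup fun i => (-(d i : EReal)) + mpMulVec (mpStar A) b i) ≤ 0 := by
      apply Finset.sup_le
      intro i _
      have h1 : mpMulVec (mpStar A) b i ≤ (d i : EReal) := le_trans (hstarb i) (hx2 i)
      have h2 : (-(d i : EReal)) + mpMulVec (mpStar A) b i ≤ (-(d i : EReal)) + (d i : EReal) :=
        add_le_add_right h1 _
      have h3 : (-(d i : EReal)) + (d i : EReal) = 0 := by
        rw [← EReal.coe_neg, ← EReal.coe_add]
        simp
      rw [h3] at h2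
      exact h2
    exact absurd (sup_le hTr hsup2) (not_le.mpr hΔ)
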